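/- Let g : [−1,1] → ℝ be a broken solution with eigenvalue 0 satisfying g(−1) = g(1) = 1. Then g(x) = 1 for all x ∈ [−1,1]. -/

import Mathlib

/-- A "broken solution" with eigenvalue `lam` of the ODE `f'' + 2·b·f' = (log q)²·lam·f`
on `[-1,1]`: `f` is continuous on `[-1,1]`, twice continuously differentiable on
`[-1,0]` and on `[0,1]` (with one-sided derivatives at the endpoints), satisfies the
ODE on `(-1,0) ∪ (0,1)`, and its one-sided derivatives at `0` satisfy
`f'(0-) = B · f'(0+)`. -/
def IsBrokenSolution (q b B lam : ℝ) (f : ℝ → ℝ) : Prop :=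
  ContinuousOn f (Set.Icc (-1) 1) ∧
  ContDiffOn ℝ 2 f (Set.Icc (-1) 0) ∧
  ContDiffOn ℝ 2 f (Set.Icc 0 1) ∧
  (∀ x ∈ Set.Ioo (-1 : ℝ) 0 ∪ Set.Ioo (0 : ℝ) 1,
    deriv (deriv f) x + 2 * b * deriv f x = (Real.log q) ^ 2 * lam * f x) ∧
  derivWithin f (Set.Icc (-1) 0) 0 = B * derivWithin f (Set.Icc 0 1) 0

/-- On an interval where `g'' + 2b g' = 0`, the function `e^{2bx} g'(x)` is constant. -/
lemma broken_aux (b a c : ℝ) (hac : a < c) (g : ℝ → ℝ)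
    (hg : ContDiffOn ℝ 2 g (Set.Icc a c))
    (hode : ∀ x ∈ Set.Ioo a c, deriv (deriv g) x + 2 * b * deriv g x = 0) :
    ∀ x ∈ Set.Icc a c, Real.exp (2*b*x) * derivWithin g (Set.Icc a c) x
      = Real.exp (2*b*a) * derivWithin g (Set.Icc a c) a := by
  set φ : ℝ → ℝ := fun x => Real.exp (2*b*x) * derivWithin g (Set.Icc a c) x with hφdef
  have hUD : UniqueDiffOn ℝ (Set.Icc a c) := uniqueDiffOn_Icc hac
  have hcont : ContinuousOn φ (Set.Icc a c) := by
    exact ((Real.continuous_exp.comp (continuous_const.mul continuous_id)).continuousOn).mul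
      (hg.continuousOn_derivWithin hUD one_le_two)
  have hderiv0 : ∀ x ∈ Set.Ioo a c, HasDerivAt φ 0 x := by
    intro x hx
    have hopen : Set.Ioo a c ∈ nhds x := isOpen_Ioo.mem_nhds hx
    have hgIoo : ContDiffOn ℝ 2 g (Set.Ioo a c) := hg.mono Set.Ioo_subset_Icc_self
    have hdg : DifferentiableAt ℝ (deriv g) x := by
      have h1 : ContDiffOn ℝ 1 (deriv g) (Set.Ioo a c) :=
        hgIoo.deriv_of_isOpen isOpen_Ioo (by norm_num)
      exact ((h1.differentiableOn one_ne_zero) x hx).differentiableAt hopen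
    have h1 : HasDerivAt (fun y => Real.exp (2*b*y)) (Real.exp (2*b*x) * (2*b)) x := by
      have := ((hasDerivAt_id x).const_mul (2*b)).exp
      simpa using this
    have h2 : HasDerivAt (deriv g) (deriv (deriv g) x) x := hdg.hasDerivAt
    have hψ : HasDerivAt (fun y => Real.exp (2*b*y) * deriv g y)
        (Real.exp (2*b*x) * (2*b) * deriv g x + Real.exp (2*b*x) * deriv (deriv g) x) x :=
      h1.mul h2
    have hval : Real.exp (2*b*x) * (2*b) * deriv g x + Real.exp (2*b*x) * deriv (deriv g) x
        = 0 := by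
      have h := hode x hx
      have : Real.exp (2*b*x) * (2*b) * deriv g x + Real.exp (2*b*x) * deriv (deriv g) x
          = Real.exp (2*b*x) * (deriv (deriv g) x + 2 * b * deriv g x) := by ring
      rw [this, h, mul_zero]
    rw [hval] at hψ
    have heqnhds : (fun y => Real.exp (2*b*y) * deriv g y) =ᶠ[nhds x] φ := by
      filter_upwards [hopen] with y hy
      simp only [hφdef]
      rw [derivWithin_of_mem_nhds (Icc_mem_nhds hy.1 hy.2)]
    exact hψ.congr_of_eventuallyEq heqnhds.symm
  have hdiff : DifferentiableOn ℝ φ (interior (Set.Icc a c)) := by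
    rw [interior_Icc]
    exact fun x hx => ((hderiv0 x hx).differentiableAt).differentiableWithinAt
  have hd0 : ∀ x ∈ interior (Set.Icc a c), deriv φ x = 0 := by
    rw [interior_Icc]; exact fun x hx => (hderiv0 x hx).deriv
  have hmono : MonotoneOn φ (Set.Icc a c) :=
    monotoneOn_of_deriv_nonneg (convex_Icc a c) hcont hdiff
      (fun x hx => le_of_eq (hd0 x hx).symm)
  have hanti : AntitoneOn φ (Set.Icc a c) :=
    antitoneOn_of_deriv_nonpos (convex_Icc a c) hcont hdiff
      (fun x hx => le_of_eq (hd0 x hx))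
  intro x hx
  have ha : a ∈ Set.Icc a c := ⟨le_refl a, hac.le⟩
  exact le_antisymm (hanti ha hx hx.1) (hmono ha hx hx.1)

theorem brokenSolution_eigenvalue_zero_boundary_one_eq_one
    (q b B : ℝ) (hq : 1 < q) (hB : 0 < B) (g : ℝ → ℝ)
    (hg : IsBrokenSolution q b B 0 g) (hg1 : g (-1) = 1) (hg2 : g 1 = 1) :
    ∀ x ∈ Set.Icc (-1 : ℝ) 1, g x = 1 := by
  obtain ⟨hc, hL, hR, hode, hjump⟩ := hg
  have hodeL : ∀ x ∈ Set.Ioo (-1 : ℝ) 0, deriv (deriv g) x + 2 * b * deriv g x = 0 := by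
    intro x hx
    have := hode x (Or.inl hx); simpa using this
  have hodeR : ∀ x ∈ Set.Ioo (0 : ℝ) 1, deriv (deriv g) x + 2 * b * deriv g x = 0 := by
    intro x hx
    have := hode x (Or.inr hx); simpa using this
  have hauxL := broken_aux b (-1) 0 (by norm_num) g hL hodeL
  have hauxR := broken_aux b 0 1 (by norm_num) g hR hodeR
  set cL := derivWithin g (Set.Icc (-1) 0) 0 with hcLdef
  set cR := derivWithin g (Set.Icc 0 1) 0 with hcRdef
  -- on the left, e^{2bx} g' = cL everywhere
  have hL0 : ∀ x ∈ Set.Icc (-1 : ℝ) 0,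
      Real.exp (2*b*x) * derivWithin g (Set.Icc (-1) 0) x = cL := by
    intro x hx
    have h1 := hauxL x hx
    have h2 := hauxL 0 ⟨by norm_num, le_refl 0⟩
    rw [h1, ← h2]; simp [hcLdef]
  have hR0 : ∀ x ∈ Set.Icc (0 : ℝ) 1,
      Real.exp (2*b*x) * derivWithin g (Set.Icc 0 1) x = cR := by
    intro x hx
    have h1 := hauxR x hx
    simpa using h1
  -- interior deriv formulas
  have hdL : ∀ x ∈ Set.Ioo (-1 : ℝ) 0, Real.exp (2*b*x) * deriv g x = cL := by
    intro x hx
    have := hL0 x (Set.Ioo_subset_Icc_self hx)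
    rwa [derivWithin_of_mem_nhds (Icc_mem_nhds hx.1 hx.2)] at this
  have hdR : ∀ x ∈ Set.Ioo (0 : ℝ) 1, Real.exp (2*b*x) * deriv g x = cR := by
    intro x hx
    have := hR0 x (Set.Ioo_subset_Icc_self hx)
    rwa [derivWithin_of_mem_nhds (Icc_mem_nhds hx.1 hx.2)] at this
  have hcLR : cL = B * cR := hjump
  have hcontL : ContinuousOn g (Set.Icc (-1 : ℝ) 0) := hL.continuousOn
  have hcontR : ContinuousOn g (Set.Icc (0 : ℝ) 1) := hR.continuousOn
  have hmemL : (-1 : ℝ) ∈ Set.Icc (-1 : ℝ) 0 := ⟨le_refl _, by norm_num⟩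
  have hmem0L : (0 : ℝ) ∈ Set.Icc (-1 : ℝ) 0 := ⟨by norm_num, le_refl _⟩
  have hmem0R : (0 : ℝ) ∈ Set.Icc (0 : ℝ) 1 := ⟨le_refl _, by norm_num⟩
  have hmemR : (1 : ℝ) ∈ Set.Icc (0 : ℝ) 1 := ⟨by norm_num, le_refl _⟩
  rcases lt_trichotomy cR 0 with hneg | hzero | hpos
  · -- cR < 0, cL < 0 : g strictly decreasing, contradiction
    exfalso
    have hcLneg : cL < 0 := by rw [hcLR]; exact mul_neg_of_pos_of_neg hB hneg
    have hantiL : StrictAntiOn g (Set.Icc (-1 : ℝ) 0) := by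
      apply strictAntiOn_of_deriv_neg (convex_Icc _ _) hcontL
      intro x hx
      rw [interior_Icc] at hx
      have h := hdL x hx
      nlinarith [Real.exp_pos (2*b*x)]
    have hantiR : StrictAntiOn g (Set.Icc (0 : ℝ) 1) := by
      apply strictAntiOn_of_deriv_neg (convex_Icc _ _) hcontR
      intro x hx
      rw [interior_Icc] at hx
      have h := hdR x hx
      nlinarith [Real.exp_pos (2*b*x)]
    have h1 : g 0 < g (-1) := hantiL hmemL hmem0L (by norm_num)
    have h2 : g 1 < g 0 := hantiR hmem0R hmemR (by norm_num)
    rw [hg1] at h1; rw [hg2] at h2; linarith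
  · -- cR = 0, cL = 0 : g constant on each piece
    have hcL0 : cL = 0 := by rw [hcLR, hzero, mul_zero]
    have hconstL : ∀ x ∈ Set.Icc (-1 : ℝ) 0, g x = 1 := by
      have hdiffL : DifferentiableOn ℝ g (interior (Set.Icc (-1 : ℝ) 0)) := by
        rw [interior_Icc]
        exact (hL.differentiableOn (by norm_num)).mono Set.Ioo_subset_Icc_self
      have hd0 : ∀ x ∈ interior (Set.Icc (-1 : ℝ) 0), deriv g x = 0 := by
        rw [interior_Icc]
        intro x hx
        have h := hdL x hx
        rw [hcL0] at h
        have he := Real.exp_pos (2*b*x)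
        -- deriv within vs deriv
        have hdw : derivWithin g (Set.Icc (-1 : ℝ) 0) x = deriv g x :=
          derivWithin_of_mem_nhds (Icc_mem_nhds hx.1 hx.2)
        nlinarith
      have hmono : MonotoneOn g (Set.Icc (-1 : ℝ) 0) :=
        monotoneOn_of_deriv_nonneg (convex_Icc _ _) hcontL hdiffL
          (fun x hx => le_of_eq (hd0 x hx).symm)
      have hanti : AntitoneOn g (Set.Icc (-1 : ℝ) 0) :=
        antitoneOn_of_deriv_nonpos (convex_Icc _ _) hcontL hdiffL
          (fun x hx => le_of_eq (hd0 x hx))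
      intro x hx
      have := le_antisymm (hanti hmemL hx hx.1) (hmono hmemL hx hx.1)
      rw [this, hg1]
    have hconstR : ∀ x ∈ Set.Icc (0 : ℝ) 1, g x = 1 := by
      have hdiffR : DifferentiableOn ℝ g (interior (Set.Icc (0 : ℝ) 1)) := by
        rw [interior_Icc]
        exact (hR.differentiableOn (by norm_num)).mono Set.Ioo_subset_Icc_self
      have hd0 : ∀ x ∈ interior (Set.Icc (0 : ℝ) 1), deriv g x = 0 := by
        rw [interior_Icc]
        intro x hx
        have h := hdR x hx
        rw [hzero] at h
        have he := Real.exp_pos (2*b*x)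
        nlinarith
      have hmono : MonotoneOn g (Set.Icc (0 : ℝ) 1) :=
        monotoneOn_of_deriv_nonneg (convex_Icc _ _) hcontR hdiffR
          (fun x hx => le_of_eq (hd0 x hx).symm)
      have hanti : AntitoneOn g (Set.Icc (0 : ℝ) 1) :=
        antitoneOn_of_deriv_nonpos (convex_Icc _ _) hcontR hdiffR
          (fun x hx => le_of_eq (hd0 x hx))
      intro x hx
      have := le_antisymm (hmono hx hmemR hx.2) (hanti hx hmemR hx.2)
      rw [this, hg2]
    intro x hx
    rcases le_total x 0 with h0 | h0
    · exact hconstL x ⟨hx.1, h0⟩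
    · exact hconstR x ⟨h0, hx.2⟩
  · -- cR > 0 : g strictly increasing, contradiction
    exfalso
    have hcLpos : 0 < cL := by rw [hcLR]; exact mul_pos hB hpos
    have hmonoL : StrictMonoOn g (Set.Icc (-1 : ℝ) 0) := by
      apply strictMonoOn_of_deriv_pos (convex_Icc _ _) hcontL
      intro x hx
      rw [interior_Icc] at hx
      have h := hdL x hx
      nlinarith [Real.exp_pos (2*b*x)]
    have hmonoR : StrictMonoOn g (Set.Icc (0 : ℝ) 1) := by
      apply strictMonoOn_of_deriv_pos (convex_Icc _ _) hcontR
      intro x hx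
      rw [interior_Icc] at hx
      have h := hdR x hx
      nlinarith [Real.exp_pos (2*b*x)]
    have h1 : g (-1) < g 0 := hmonoL hmemL hmem0L (by norm_num)
    have h2 : g 0 < g 1 := hmonoR hmem0R hmemR (by norm_num)
    rw [hg1] at h1; rw [hg2] at h2; linarith
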